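/- (Sandwich Theorem) Let X be a real vector space and let f, g : X → ℝ be functions such that f is convex, g is concave, and g(x) ≤ f(x) for every x ∈ X. Then there exist a linear functional l : X → ℝ and a scalar α ∈ ℝ such that g(x) ≤ l(x) + α ≤ f(x) for all x ∈ X. -/

import Mathlib

open Pointwise

/-- Algebraic interior (core) of a set `A` in a real vector space:
`cor A = {x ∈ A | ∀ d, ∃ δ > 0, ∀ λ ∈ [0, δ], x + λ • d ∈ A}`. -/
def cor {X : Type*} [AddCommGroup X] [Module ℝ X] (A : Set X) : Set X :=
  {x | x ∈ A ∧ ∀ d : X, ∃ δ : ℝ, 0 < δ ∧ ∀ lam ∈ Set.Icc (0 : ℝ) δ, x + lam • d ∈ A}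

/-- Relative algebraic interior of `A`: directions are taken in `L(A) = span (A - A)`. -/
def icr {X : Type*} [AddCommGroup X] [Module ℝ X] (A : Set X) : Set X :=
  {x | x ∈ A ∧ ∀ d ∈ Submodule.span ℝ (A - A),
    ∃ δ : ℝ, 0 < δ ∧ ∀ lam ∈ Set.Icc (0 : ℝ) δ, x + lam • d ∈ A}

/-- Vectorial closure of `A`:
`vcl A = {b | ∃ d, ∀ δ > 0, ∃ λ ∈ [0, δ], b + λ • d ∈ A}`. -/
def vcl {X : Type*} [AddCommGroup X] [Module ℝ X] (A : Set X) : Set X :=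
  {b | ∃ d : X, ∀ δ : ℝ, 0 < δ → ∃ lam ∈ Set.Icc (0 : ℝ) δ, b + lam • d ∈ A}

/-- The core convex topology `τ_c`: the topology whose open sets are the unions of
members of `𝔅 = {A | A convex and cor A = A}`; since `𝔅` is a topological basis
(closed under binary intersection, contains `X` and `∅`), this is the topology
generated by `𝔅`. -/
def tauc (X : Type*) [AddCommGroup X] [Module ℝ X] : TopologicalSpace X :=
  TopologicalSpace.generateFrom {A : Set X | Convex ℝ A ∧ cor A = A}

/-- Sandwich Theorem: If `f : X → ℝ` is convex, `g : X → ℝ` is concave and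
`g ≤ f`, then there exist a linear functional `l` and `α ∈ ℝ` with
`g x ≤ l x + α ≤ f x` for all `x`. -/
theorem stmt19 {X : Type*} [AddCommGroup X] [Module ℝ X] (f g : X → ℝ)
    (hf : ConvexOn ℝ Set.univ f) (hg : ConcaveOn ℝ Set.univ g)
    (hle : ∀ x : X, g x ≤ f x) :
    ∃ (l : X →ₗ[ℝ] ℝ) (α : ℝ), ∀ x : X, g x ≤ l x + α ∧ l x + α ≤ f x := by
  classical
  -- the set of difference quotients
  set S : X → Set ℝ := fun z =>
    {r : ℝ | ∃ t : ℝ, 0 < t ∧ ∃ x y : X, x - y = t • z ∧ r = (f x - g y) / t} with hS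
  have hmem : ∀ z : X, (f z - g 0) ∈ S z := by
    intro z
    exact ⟨1, one_pos, z, 0, by simp, by simp⟩
  have hne : ∀ z : X, (S z).Nonempty := fun z => ⟨_, hmem z⟩
  -- key combination lemma
  have hkey : ∀ z₁ z₂ : X, ∀ a ∈ S z₁, ∀ b ∈ S z₂, ∃ c ∈ S (z₁ + z₂), c ≤ a + b := by
    rintro z₁ z₂ a ⟨t₁, ht₁, x₁, y₁, hxy₁, rfl⟩ b ⟨t₂, ht₂, x₂, y₂, hxy₂, rfl⟩
    have hts : 0 < t₁ + t₂ := by linarith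
    set lam : ℝ := t₂ / (t₁ + t₂) with hlam
    set mu : ℝ := t₁ / (t₁ + t₂) with hmu
    have hlam0 : 0 ≤ lam := by positivity
    have hmu0 : 0 ≤ mu := by positivity
    have hsum : lam + mu = 1 := by rw [hlam, hmu, ← add_div, add_comm t₂ t₁, div_self hts.ne']
    set t : ℝ := t₁ * t₂ / (t₁ + t₂) with ht
    have htpos : 0 < t := by positivity
    have h1 : lam * t₁ = t := by rw [hlam, ht]; field_simp; try ring
    have h2 : mu * t₂ = t := by rw [hmu, ht]; field_simp; try ring
    refine ⟨(f (lam • x₁ + mu • x₂) - g (lam • y₁ + mu • y₂)) / t,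
      ⟨t, htpos, lam • x₁ + mu • x₂, lam • y₁ + mu • y₂, ?_, rfl⟩, ?_⟩
    · have : lam • x₁ + mu • x₂ - (lam • y₁ + mu • y₂)
          = lam • (x₁ - y₁) + mu • (x₂ - y₂) := by
        module
      rw [this, hxy₁, hxy₂, smul_smul, smul_smul, h1, h2, ← smul_add]
    · have hfc := hf.2 (Set.mem_univ x₁) (Set.mem_univ x₂) hlam0 hmu0 hsum
      have hgc := hg.2 (Set.mem_univ y₁) (Set.mem_univ y₂) hlam0 hmu0 hsum
      rw [div_le_iff₀ htpos]
      have : f (lam • x₁ + mu • x₂) - g (lam • y₁ + mu • y₂)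
          ≤ lam * (f x₁ - g y₁) + mu * (f x₂ - g y₂) := by
        simp only [smul_eq_mul] at hfc hgc; linarith
      calc f (lam • x₁ + mu • x₂) - g (lam • y₁ + mu • y₂)
          ≤ lam * (f x₁ - g y₁) + mu * (f x₂ - g y₂) := this
        _ = ((f x₁ - g y₁) / t₁ + (f x₂ - g y₂) / t₂) * t := by
            rw [hlam, hmu, ht]; field_simp
  -- elements of S 0 are nonneg
  have hS0 : ∀ r ∈ S (0 : X), 0 ≤ r := by
    rintro r ⟨t, ht, x, y, hxy, rfl⟩
    have hxy' : x = y := by rwa [smul_zero, sub_eq_zero] at hxy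
    subst hxy'
    exact div_nonneg (by linarith [hle x]) ht.le
  -- bounded below
  have hbdd : ∀ z : X, BddBelow (S z) := by
    intro z
    refine ⟨-(f (-z) - g 0), ?_⟩
    intro a ha
    obtain ⟨c, hc, hcle⟩ := hkey z (-z) a ha _ (hmem (-z))
    rw [add_neg_cancel] at hc
    have := hS0 c hc
    linarith
  set N : X → ℝ := fun z => sInf (S z) with hN
  have hNle : ∀ z : X, ∀ r ∈ S z, N z ≤ r := fun z r hr => csInf_le (hbdd _) hr
  -- N is subadditive
  have N_add : ∀ z₁ z₂ : X, N (z₁ + z₂) ≤ N z₁ + N z₂ := by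
    intro z₁ z₂
    have h1 : N (z₁ + z₂) - N z₂ ≤ N z₁ := by
      apply le_csInf (hne z₁)
      intro a ha
      have h2 : N (z₁ + z₂) - a ≤ N z₂ := by
        apply le_csInf (hne z₂)
        intro b hb
        obtain ⟨c, hc, hcl⟩ := hkey z₁ z₂ a ha b hb
        have := hNle _ c hc
        linarith
      linarith
    linarith
  -- positive homogeneity
  have N_hom : ∀ c : ℝ, 0 < c → ∀ z : X, N (c • z) = c * N z := by
    intro c hc z
    have himg : S (c • z) = (fun r => c * r) '' S z := by
      ext r
      constructor
      · rintro ⟨t, ht, x, y, hxy, rfl⟩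
        refine ⟨(f x - g y) / (t * c), ⟨t * c, by positivity, x, y, ?_, rfl⟩, ?_⟩
        · rw [hxy, smul_smul]; try ring_nf
        · field_simp
      · rintro ⟨r, ⟨t, ht, x, y, hxy, rfl⟩, rfl⟩
        refine ⟨t / c, by positivity, x, y, ?_, ?_⟩
        · rw [hxy, smul_smul]; congr 1; field_simp
        · field_simp
    rw [hN]
    show sInf (S (c • z)) = c * sInf (S z)
    rw [himg, show (fun r => c * r) '' S z = c • S z from by
        ext r; simp [Set.mem_smul_set, eq_comm],
      Real.sInf_smul_of_nonneg hc.le, smul_eq_mul]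
  -- apply Hahn-Banach
  obtain ⟨l, -, hlN⟩ := exists_extension_of_le_sublinear
    ((0 : X →ₗ[ℝ] ℝ).toPMap ⊥) N N_hom N_add
    (by
      rintro ⟨x, hx⟩
      have hx' : x ∈ (⊥ : Submodule ℝ X) := hx
      rw [Submodule.mem_bot] at hx'
      subst hx'
      have h0 : (0:ℝ) ≤ N 0 := le_csInf (hne 0) hS0
      simpa [LinearMap.toPMap] using h0)
  -- the sandwich bound
  have hlb : ∀ x y : X, g y - l y ≤ f x - l x := by
    intro x y
    have h1 : l (x - y) ≤ N (x - y) := hlN _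
    have h2 : N (x - y) ≤ f x - g y := by
      apply hNle
      exact ⟨1, one_pos, x, y, by simp, by simp⟩
    rw [map_sub] at h1
    linarith
  set α : ℝ := sSup {r : ℝ | ∃ y : X, r = g y - l y} with hα
  have hbddA : BddAbove {r : ℝ | ∃ y : X, r = g y - l y} := by
    refine ⟨f 0 - l 0, ?_⟩
    rintro r ⟨y, rfl⟩
    exact hlb 0 y
  have hneA : {r : ℝ | ∃ y : X, r = g y - l y}.Nonempty := ⟨g 0 - l 0, 0, rfl⟩
  refine ⟨l, α, fun x => ⟨?_, ?_⟩⟩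
  · have : g x - l x ≤ α := le_csSup hbddA ⟨x, rfl⟩
    linarith
  · have : α ≤ f x - l x := csSup_le hneA (by rintro r ⟨y, rfl⟩; exact hlb x y)
    linarith
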